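/- Let n be an integer and let f_k(n) be the polynomials defined by the recursion f_0(n) = 1 and f_{k+1}(n)(u) = (n − k)·u·f_k(n)(u) + (u² − 1)·d/du[f_k(n)(u)]. Then for every natural number k and every complex number x with sinh x ≠ 0, the k-th derivative of the function z ↦ (sinh z)^n (integer power), evaluated at x, equals (sinh x)^(n−k) · f_k(n)(cosh x). -/

import Mathlib

open Polynomial

/-- The polynomials `f_k(n)` with `f_0(n) = 1` and
`f_{k+1}(n)(u) = (n - k)·u·f_k(n)(u) + (u² - 1)·d/du[f_k(n)(u)]`. -/
noncomputable def fPoly (n : ℤ) : ℕ → Polynomial ℂ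
  | 0 => 1
  | k + 1 =>
      Polynomial.C ((n : ℂ) - (k : ℂ)) * Polynomial.X * fPoly n k +
        (Polynomial.X ^ 2 - 1) * Polynomial.derivative (fPoly n k)

theorem iteratedDeriv_sinh_zpow_eq_fPoly (n : ℤ) (k : ℕ) (x : ℂ)
    (hx : Complex.sinh x ≠ 0) :
    iteratedDeriv k (fun z : ℂ => Complex.sinh z ^ n) x =
      Complex.sinh x ^ (n - (k : ℤ)) * (fPoly n k).eval (Complex.cosh x) := by
  induction k generalizing x with
  | zero => simp [fPoly]
  | succ k ih =>
    have hopen : IsOpen {z : ℂ | Complex.sinh z ≠ 0} :=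
      isOpen_ne.preimage Complex.continuous_sinh
    have hev : (fun z : ℂ => Complex.sinh z ^ (n - (k : ℤ)) *
        (fPoly n k).eval (Complex.cosh z)) =ᶠ[nhds x]
        iteratedDeriv k (fun z : ℂ => Complex.sinh z ^ n) := by
      filter_upwards [hopen.mem_nhds hx] with z hz
      exact (ih z hz).symm
    rw [iteratedDeriv_succ, ← hev.deriv_eq]
    have h1 : HasDerivAt (fun z : ℂ => Complex.sinh z ^ (n - (k : ℤ)))
        ((((n - (k : ℤ)) : ℤ) : ℂ) * Complex.sinh x ^ (n - (k : ℤ) - 1) * Complex.cosh x) x :=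
      (hasDerivAt_zpow (n - (k : ℤ)) (Complex.sinh x) (Or.inl hx)).comp x (Complex.hasDerivAt_sinh x)
    have h2 : HasDerivAt (fun z : ℂ => (fPoly n k).eval (Complex.cosh z))
        ((Polynomial.derivative (fPoly n k)).eval (Complex.cosh x) * Complex.sinh x) x :=
      ((fPoly n k).hasDerivAt (Complex.cosh x)).comp x (Complex.hasDerivAt_cosh x)
    rw [(h1.fun_mul h2).deriv]
    have hid : Complex.cosh x ^ 2 - 1 = Complex.sinh x ^ 2 := by
      have := Complex.cosh_sq_sub_sinh_sq x
      ring_nf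
      ring_nf at this
      linear_combination this
    have hm : Complex.sinh x ^ (n - (k : ℤ)) =
        Complex.sinh x ^ (n - (k : ℤ) - 1) * Complex.sinh x := by
      rw [← zpow_add_one₀ hx]; ring_nf
    have hexp : n - ((k + 1 : ℕ) : ℤ) = n - (k : ℤ) - 1 := by push_cast; ring
    rw [hexp]
    simp only [fPoly, Polynomial.eval_add, Polynomial.eval_mul, Polynomial.eval_C,
      Polynomial.eval_X, Polynomial.eval_sub, Polynomial.eval_pow, Polynomial.eval_one]
    rw [hm, hid]
    push_cast
    ring
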